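/- arXiv:1410.1141 — 2 statements merged into one kernel-verified Lean document; each statement's English description precedes it below -/
import Mathlib

section
/- Let d, m be positive integers, let x₁, …, x_m ∈ ℝ^d, let α₁, …, α_m be real numbers, and define F(w, u, v) = Σ_{i=1}^m αᵢ·⟨w, xᵢ⟩·⟨u, xᵢ⟩·⟨v, xᵢ⟩ for w, u, v ∈ ℝ^d. Let (w*, u*, v*) be unit vectors attaining the maximum of F over all triples of unit vectors, let τ ∈ [0, 1], let w₁ be a unit vector with ⟨w₁, w*⟩ ≥ 1/√(2d), and let u₁, v₁ be unit vectors satisfying F(w₁, u₁, v₁) ≥ (1 − τ)·sup{ F(w₁, u, v) : ‖u‖ = ‖v‖ = 1 }. Then F(w₁, u₁, v₁) ≥ ((1 − τ)/√(2d))·F(w*, u*, v*). -/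
open Finset
open scoped RealInnerProductSpace

/-- Deterministic core of Lemma A.3: if `w₁` is a unit vector with
`⟨w₁, w*⟩ ≥ 1/√(2d)` and `(u₁, v₁)` is a `(1−τ)`-approximate bilinear maximizer of
`F(w₁, ·, ·)`, then `(w₁, u₁, v₁)` is a `((1−τ)/√(2d))`-approximate maximizer of the
trilinear form `F`. -/
theorem approx_tensor_maximization
    (d m : ℕ) (hd : 0 < d) (hm : 0 < m)
    (x : Fin m → EuclideanSpace ℝ (Fin d)) (α : Fin m → ℝ)
    (F : EuclideanSpace ℝ (Fin d) → EuclideanSpace ℝ (Fin d) →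
         EuclideanSpace ℝ (Fin d) → ℝ)
    (hF : ∀ w u v, F w u v = ∑ i, α i * ⟪w, x i⟫ * ⟪u, x i⟫ * ⟪v, x i⟫)
    (wstar ustar vstar : EuclideanSpace ℝ (Fin d))
    (hwstar : ‖wstar‖ = 1) (hustar : ‖ustar‖ = 1) (hvstar : ‖vstar‖ = 1)
    (hmax : ∀ w u v : EuclideanSpace ℝ (Fin d),
      ‖w‖ = 1 → ‖u‖ = 1 → ‖v‖ = 1 → F w u v ≤ F wstar ustar vstar)
    (τ : ℝ) (hτ0 : 0 ≤ τ) (hτ1 : τ ≤ 1)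
    (w₁ : EuclideanSpace ℝ (Fin d)) (hw₁ : ‖w₁‖ = 1)
    (hcorr : ⟪w₁, wstar⟫ ≥ 1 / Real.sqrt (2 * d))
    (u₁ v₁ : EuclideanSpace ℝ (Fin d)) (hu₁ : ‖u₁‖ = 1) (hv₁ : ‖v₁‖ = 1)
    (happrox : ∀ u v : EuclideanSpace ℝ (Fin d), ‖u‖ = 1 → ‖v‖ = 1 →
      F w₁ u₁ v₁ ≥ (1 - τ) * F w₁ u v) :
    F w₁ u₁ v₁ ≥ ((1 - τ) / Real.sqrt (2 * d)) * F wstar ustar vstar := by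
  set g : EuclideanSpace ℝ (Fin d) :=
    ∑ i, (α i * ⟪ustar, x i⟫ * ⟪vstar, x i⟫) • x i with hg
  have key : ∀ w : EuclideanSpace ℝ (Fin d), F w ustar vstar = ⟪w, g⟫ := by
    intro w
    rw [hF, hg, inner_sum]
    refine Finset.sum_congr rfl fun i _ => ?_
    rw [real_inner_smul_right]; ring
  set M : ℝ := F wstar ustar vstar with hM
  have hMg : ⟪wstar, g⟫ = M := (key wstar).symm
  have hM0 : 0 ≤ M := by
    have h1 : F (-wstar) ustar vstar ≤ M := by
      apply hmax _ _ _ _ hustar hvstar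
      rw [norm_neg, hwstar]
    rw [key, inner_neg_left, hMg] at h1
    linarith
  have hgM : ‖g‖ = M := by
    rcases eq_or_ne g 0 with h0 | h0
    · rw [h0, norm_zero]
      have := hMg
      rw [h0, inner_zero_right] at this
      linarith
    · have hng : (0:ℝ) < ‖g‖ := norm_pos_iff.mpr h0
      have hunit : ‖(‖g‖⁻¹ • g : EuclideanSpace ℝ (Fin d))‖ = 1 := by
        rw [norm_smul, norm_inv, norm_norm, inv_mul_cancel₀ hng.ne']
      have h1 : F (‖g‖⁻¹ • g) ustar vstar ≤ M := hmax _ _ _ hunit hustar hvstar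
      rw [key, real_inner_smul_left, real_inner_self_eq_norm_sq] at h1
      have h2 : ‖g‖⁻¹ * ‖g‖ ^ 2 = ‖g‖ := by field_simp
      rw [h2] at h1
      have h3 : M ≤ ‖g‖ := by
        calc M = ⟪wstar, g⟫ := hMg.symm
        _ ≤ ‖wstar‖ * ‖g‖ := real_inner_le_norm _ _
        _ = ‖g‖ := by rw [hwstar, one_mul]
      linarith
  -- g = M • wstar
  have hgeq : g = M • wstar := by
    have hz : ⟪g - M • wstar, g - M • wstar⟫ = 0 := by
      rw [inner_sub_sub_self]
      rw [real_inner_smul_right, real_inner_smul_left, real_inner_smul_left,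
        real_inner_smul_right, real_inner_self_eq_norm_sq, real_inner_self_eq_norm_sq,
        hgM, hwstar, real_inner_comm wstar g, hMg]
      ring
    have h := inner_self_eq_zero.mp hz
    exact sub_eq_zero.mp h
  have hF1 : F w₁ ustar vstar = M * ⟪w₁, wstar⟫ := by
    rw [key, hgeq, real_inner_smul_right]
  have hs : (0:ℝ) < Real.sqrt (2 * d) := by
    apply Real.sqrt_pos.mpr
    positivity
  have hstep : M / Real.sqrt (2 * d) ≤ M * ⟪w₁, wstar⟫ := by
    have := mul_le_mul_of_nonneg_left hcorr hM0
    calc M / Real.sqrt (2 * d) = M * (1 / Real.sqrt (2 * d)) := by ring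
    _ ≤ M * ⟪w₁, wstar⟫ := this
  have h1 : F w₁ u₁ v₁ ≥ (1 - τ) * F w₁ ustar vstar := happrox ustar vstar hustar hvstar
  have h2 : (1 - τ) * (M / Real.sqrt (2 * d)) ≤ (1 - τ) * (M * ⟪w₁, wstar⟫) :=
    mul_le_mul_of_nonneg_left hstep (by linarith)
  calc ((1 - τ) / Real.sqrt (2 * d)) * M = (1 - τ) * (M / Real.sqrt (2 * d)) := by ring
  _ ≤ (1 - τ) * (M * ⟪w₁, wstar⟫) := h2
  _ = (1 - τ) * F w₁ ustar vstar := by rw [hF1]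
  _ ≤ F w₁ u₁ v₁ := h1
end

section
/- Let d, m, s be positive integers, let x₁, …, x_m ∈ ℝ^d, let α₁, …, α_m be real numbers, and define F(w, u, v) = Σ_{i=1}^m αᵢ·⟨w, xᵢ⟩·⟨u, xᵢ⟩·⟨v, xᵢ⟩ for w, u, v ∈ ℝ^d. Let w₁, …, w_s be independent random vectors in ℝ^d, each with i.i.d. standard normal N(0,1) coordinates, and let ŵ_t = w_t/‖w_t‖. Then with probability at least 1 − (1 − 1/(2d − 1))^s, there exists t ≤ s such that sup{ F(ŵ_t, u, v) : ‖u‖ = ‖v‖ = 1 } ≥ (1/√(2d)) · sup{ F(w, u, v) : ‖w‖ = ‖u‖ = ‖v‖ = 1 }. In particular, for δ ∈ (0,1), if s ≥ (2d − 1)·ln(1/δ) this holds with probability at least 1 − δ. -/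
open MeasureTheory ProbabilityTheory Finset

noncomputable def nu (d : ℕ) : Measure (Fin d → ℝ) :=
  Measure.pi fun _ : Fin d => gaussianReal 0 1

instance (d : ℕ) : IsProbabilityMeasure (nu d) := by unfold nu; infer_instance

def Nsq {d : ℕ} (w : Fin d → ℝ) : ℝ := ∑ i, w i ^ 2

noncomputable def rr {d : ℕ} (j k : Fin d) (w : Fin d → ℝ) : ℝ := w j * w k / Nsq w

noncomputable def Zf {d : ℕ} (e : Fin d → ℝ) (w : Fin d → ℝ) : ℝ :=
  (∑ j, e j * w j) ^ 2 / Nsq w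

lemma measurable_rr {d : ℕ} (j k : Fin d) : Measurable (rr j k) := by
  apply Measurable.div
  · exact ((measurable_pi_apply j).mul (measurable_pi_apply k))
  · exact Finset.measurable_sum _ (fun i _ => (measurable_pi_apply i).pow_const 2)

lemma Nsq_nonneg {d : ℕ} (w : Fin d → ℝ) : 0 ≤ Nsq w :=
  Finset.sum_nonneg fun i _ => sq_nonneg _

lemma sq_le_Nsq {d : ℕ} (j : Fin d) (w : Fin d → ℝ) : w j ^ 2 ≤ Nsq w :=
  Finset.single_le_sum (fun i _ => sq_nonneg (w i)) (Finset.mem_univ j)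

lemma abs_rr_le_one {d : ℕ} (j k : Fin d) (w : Fin d → ℝ) : |rr j k w| ≤ 1 := by
  unfold rr
  rcases eq_or_lt_of_le (Nsq_nonneg w) with h | h
  · simp [← h]
  · rw [abs_div, abs_of_pos h, div_le_one h, abs_mul]
    nlinarith [sq_le_Nsq j w, sq_le_Nsq k w, sq_abs (w j), sq_abs (w k),
      sq_nonneg (|w j| - |w k|), abs_nonneg (w j), abs_nonneg (w k)]

lemma integrable_rr {d : ℕ} (j k : Fin d) : Integrable (rr j k) (nu d) := by
  refine Integrable.mono' (integrable_const 1) (measurable_rr j k).aestronglyMeasurable ?_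
  exact Filter.Eventually.of_forall fun w => (abs_rr_le_one j k w)

lemma gauss_neg : (gaussianReal 0 1).map Neg.neg = gaussianReal 0 1 := by
  have h := gaussianReal_map_const_mul (μ := 0) (v := 1) (-1)
  have h2 : ((-1 : ℝ) * ·) = (Neg.neg : ℝ → ℝ) := by funext x; simp
  rw [h2] at h
  rw [h]
  congr 1
  · simp
  · ext
    simp

lemma mp_flip {d : ℕ} (j : Fin d) :
    MeasurePreserving (fun (w : Fin d → ℝ) i => if i = j then -(w i) else w i) (nu d) (nu d) := by
  classical
  have := measurePreserving_pi (fun _ : Fin d => gaussianReal 0 1)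
    (fun _ : Fin d => gaussianReal 0 1)
    (f := fun (i : Fin d) (a : ℝ) => if i = j then -a else a)
    (fun i => by
      by_cases h : i = j
      · simpa [h] using (⟨measurable_neg, gauss_neg⟩ :
          MeasurePreserving (Neg.neg) (gaussianReal 0 1) (gaussianReal 0 1))
      · convert MeasurePreserving.id (gaussianReal 0 1) using 1
        funext a; simp [h])
  exact this

lemma mp_perm {d : ℕ} (σ : Fin d ≃ Fin d) :
    MeasurePreserving (fun (w : Fin d → ℝ) => w ∘ σ) (nu d) (nu d) := by
  have := measurePreserving_arrowCongr' (fun _ : Fin d => gaussianReal 0 1)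
    (fun _ : Fin d => gaussianReal 0 1) σ.symm (MeasurableEquiv.refl ℝ)
    (fun i => MeasurePreserving.id _)
  convert this using 1
  · funext w; rfl
  · rfl
  · rfl

lemma integral_comp_mp {d : ℕ} {T : (Fin d → ℝ) → (Fin d → ℝ)}
    (hT : MeasurePreserving T (nu d) (nu d)) {g : (Fin d → ℝ) → ℝ} (hg : Measurable g) :
    ∫ w, g (T w) ∂(nu d) = ∫ w, g w ∂(nu d) := by
  conv_rhs => rw [← hT.map_eq]
  rw [integral_map hT.measurable.aemeasurable hg.aestronglyMeasurable]

lemma integral_rr_off_diag {d : ℕ} {j k : Fin d} (h : j ≠ k) : ∫ w, rr j k w ∂(nu d) = 0 := by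
  classical
  have key : ∫ w, rr j k w ∂(nu d) = - ∫ w, rr j k w ∂(nu d) := by
    conv_lhs => rw [← integral_comp_mp (mp_flip j) (measurable_rr j k)]
    rw [← integral_neg]
    congr 1; funext w
    have hN : Nsq (fun i => if i = j then -(w i) else w i) = Nsq w := by
      unfold Nsq
      refine Finset.sum_congr rfl fun i _ => ?_
      by_cases hij : i = j <;> simp [hij]
    simp only [rr, hN, if_pos rfl, if_neg (Ne.symm h), if_true]
    ring_nf
  linarith

lemma integral_rr_diag_eq {d : ℕ} (j k : Fin d) :
    ∫ w, rr j j w ∂(nu d) = ∫ w, rr k k w ∂(nu d) := by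
  classical
  have := integral_comp_mp (mp_perm (Equiv.swap j k)) (measurable_rr j j)
  rw [← this]
  congr 1; funext w
  have hN : Nsq (w ∘ (Equiv.swap j k)) = Nsq w := by
    unfold Nsq
    exact Fintype.sum_equiv (Equiv.swap j k) _ _ (fun i => rfl)
  simp only [rr, hN, Function.comp_apply, Equiv.swap_apply_left]

lemma nu_Nsq_zero {d : ℕ} (hd : 0 < d) : nu d {w | Nsq w = 0} = 0 := by
  have j0 : Fin d := ⟨0, hd⟩
  have hsub : {w : Fin d → ℝ | Nsq w = 0} ⊆ (Function.eval j0) ⁻¹' {(0 : ℝ)} := by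
    intro w hw
    have h1 : w j0 ^ 2 ≤ 0 := hw ▸ sq_le_Nsq j0 w
    have : w j0 ^ 2 = 0 := le_antisymm h1 (sq_nonneg _)
    simpa using pow_eq_zero_iff (n := 2) (by norm_num) |>.mp this
  refine measure_mono_null hsub ?_
  exact Measure.pi_eval_preimage_null _
    (gaussianReal_absolutelyContinuous 0 one_ne_zero (measure_singleton 0))

lemma integral_rr_diag {d : ℕ} (hd : 0 < d) (j : Fin d) :
    ∫ w, rr j j w ∂(nu d) = 1 / d := by
  have hsum : ∫ w, (∑ k, rr k k w) ∂(nu d) = 1 := by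
    have hae : (fun w : Fin d → ℝ => ∑ k, rr k k w) =ᵐ[nu d] (fun _ => (1 : ℝ)) := by
      filter_upwards [compl_mem_ae_iff.mpr (nu_Nsq_zero hd)] with w hw
      simp only [Set.mem_compl_iff, Set.mem_setOf_eq] at hw
      simp only [rr, ← Finset.sum_div]
      have : ∑ i, w i * w i = Nsq w := by
        unfold Nsq; exact Finset.sum_congr rfl fun i _ => (sq (w i)).symm
      rw [this]
      exact div_self hw
    rw [integral_congr_ae hae]
    simp
  rw [integral_finset_sum _ (fun k _ => integrable_rr k k)] at hsum
  have : ∀ k : Fin d, ∫ w, rr k k w ∂(nu d) = ∫ w, rr j j w ∂(nu d) :=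
    fun k => integral_rr_diag_eq k j
  rw [Finset.sum_congr rfl (fun k _ => this k), Finset.sum_const, Finset.card_univ,
    Fintype.card_fin, nsmul_eq_mul] at hsum
  field_simp
  linarith [hsum]

lemma Zf_eq {d : ℕ} (e w : Fin d → ℝ) : Zf e w = ∑ j, ∑ k, e j * e k * rr j k w := by
  unfold Zf rr
  rw [sq, Finset.sum_mul_sum, Finset.sum_div]
  refine Finset.sum_congr rfl fun j _ => ?_
  rw [Finset.sum_div]
  refine Finset.sum_congr rfl fun k _ => ?_
  ring

lemma integral_Zf {d : ℕ} (hd : 0 < d) (e : Fin d → ℝ) (he : ∑ j, e j ^ 2 = 1) :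
    ∫ w, Zf e w ∂(nu d) = 1 / d := by
  classical
  have : ∫ w, Zf e w ∂(nu d) = ∑ j, ∑ k, e j * e k * ∫ w, rr j k w ∂(nu d) := by
    simp_rw [Zf_eq]
    rw [integral_finset_sum _ (fun j _ => integrable_finset_sum _
      (fun k _ => ((integrable_rr j k).const_mul _)))]
    refine Finset.sum_congr rfl fun j _ => ?_
    rw [integral_finset_sum _ (fun k _ => (integrable_rr j k).const_mul _)]
    exact Finset.sum_congr rfl fun k _ => MeasureTheory.integral_const_mul _ _
  rw [this]
  have hterm : ∀ j k : Fin d, e j * e k * ∫ w, rr j k w ∂(nu d)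
      = if k = j then e j ^ 2 * (1 / d) else 0 := by
    intro j k
    by_cases h : k = j
    · subst h; rw [integral_rr_diag hd, if_pos rfl, sq]
    · rw [integral_rr_off_diag (Ne.symm h), if_neg h, mul_zero]

  simp_rw [hterm]
  simp only [Finset.sum_ite_eq', Finset.mem_univ, if_true, ← Finset.sum_mul, he, one_mul]

lemma measurable_Zf {d : ℕ} (e : Fin d → ℝ) : Measurable (Zf e) := by
  apply Measurable.div
  · exact (Finset.measurable_sum _ (fun j _ => (measurable_pi_apply j).const_mul _)).pow_const 2
  · exact Finset.measurable_sum _ (fun i _ => (measurable_pi_apply i).pow_const 2)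

lemma Zf_nonneg {d : ℕ} (e w : Fin d → ℝ) : 0 ≤ Zf e w :=
  div_nonneg (sq_nonneg _) (Nsq_nonneg w)

lemma Zf_le_one {d : ℕ} (e : Fin d → ℝ) (he : ∑ j, e j ^ 2 = 1) (w : Fin d → ℝ) : Zf e w ≤ 1 := by
  unfold Zf
  rcases eq_or_lt_of_le (Nsq_nonneg w) with h | h
  · simp [← h]
  · rw [div_le_one h]
    calc (∑ j, e j * w j) ^ 2 ≤ (∑ j, e j ^ 2) * ∑ j, w j ^ 2 :=
          Finset.sum_mul_sq_le_sq_mul_sq _ _ _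
    _ = Nsq w := by rw [he, one_mul]; rfl

lemma integrable_Zf {d : ℕ} (e : Fin d → ℝ) (he : ∑ j, e j ^ 2 = 1) :
    Integrable (Zf e) (nu d) := by
  refine Integrable.mono' (integrable_const 1) (measurable_Zf e).aestronglyMeasurable ?_
  refine Filter.Eventually.of_forall fun w => ?_
  rw [Real.norm_eq_abs, abs_of_nonneg (Zf_nonneg e w)]
  exact Zf_le_one e he w

lemma markov_bound {d : ℕ} (hd : 0 < d) (e : Fin d → ℝ) (he : ∑ j, e j ^ 2 = 1) :
    1 / (2 * (d : ℝ) - 1) ≤ (nu d {w | 1 / (2 * (d : ℝ)) ≤ Zf e w}).toReal := by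
  set A : Set (Fin d → ℝ) := {w | 1 / (2 * (d : ℝ)) ≤ Zf e w} with hA_def
  have hA : MeasurableSet A := measurableSet_le measurable_const (measurable_Zf e)
  set p : ℝ := (nu d A).toReal with hp_def
  have hp1 : p ≤ 1 := by
    rw [hp_def]
    exact ENNReal.toReal_le_of_le_ofReal zero_le_one (by simpa using prob_le_one)
  have hcompl : (nu d Aᶜ).toReal = 1 - p := by
    rw [prob_compl_eq_one_sub hA, hp_def,
      ENNReal.toReal_sub_of_le prob_le_one ENNReal.one_ne_top, ENNReal.toReal_one]
  have hint := integral_Zf hd e he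
  have hsplit : ∫ w, Zf e w ∂(nu d) = (∫ w in A, Zf e w ∂(nu d)) + ∫ w in Aᶜ, Zf e w ∂(nu d) :=
    (integral_add_compl hA (integrable_Zf e he)).symm
  have h1 : ∫ w in A, Zf e w ∂(nu d) ≤ p := by
    have := setIntegral_mono_on ((integrable_Zf e he).integrableOn)
      (integrableOn_const (measure_ne_top _ _)) hA
      (fun w _ => Zf_le_one e he w)
    simpa [setIntegral_const, measureReal_def] using this
  have h2 : ∫ w in Aᶜ, Zf e w ∂(nu d) ≤ (1 - p) * (1 / (2 * (d : ℝ))) := by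
    have := setIntegral_mono_on ((integrable_Zf e he).integrableOn)
      (integrableOn_const (C := 1 / (2 * (d : ℝ))) (measure_ne_top _ _)) hA.compl
      (fun w hw => le_of_not_ge (by simpa [hA_def] using hw))
    simpa [setIntegral_const, measureReal_def, hcompl, smul_eq_mul] using this
  have hd1 : (1 : ℝ) ≤ (d : ℝ) := by exact_mod_cast hd
  have key : 1 / (d : ℝ) ≤ p + (1 - p) * (1 / (2 * (d : ℝ))) := by
    rw [← hint, hsplit]; linarith
  have h2d : (2*(d:ℝ)) * (1/(2*(d:ℝ))) = 1 := mul_one_div_cancel (by linarith)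
  rw [div_le_iff₀ (by linarith)] at key ⊢
  nlinarith [key, h2d, hp1, hd1, mul_nonneg (sub_nonneg.mpr hp1) (le_of_lt (show (0:ℝ) < 1/(2*(d:ℝ)) by positivity))]

def Sph (d : ℕ) : Set (Fin d → ℝ) := {u | ∑ j, u j ^ 2 = 1}

lemma isCompact_Sph : IsCompact (Sph d) := by
  have hq : Continuous (fun u : Fin d → ℝ => ∑ j, u j ^ 2) := by fun_prop
  have hclosed : IsClosed (Sph d) := isClosed_singleton.preimage hq
  have hbdd : Bornology.IsBounded (Sph d) := by
    refine (Metric.isBounded_iff_subset_closedBall 0).mpr ⟨1, fun u hu => ?_⟩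
    rw [Metric.mem_closedBall, dist_zero_right]
    refine (pi_norm_le_iff_of_nonneg zero_le_one).mpr fun j => ?_
    rw [Real.norm_eq_abs, ← Real.sqrt_sq_eq_abs]
    calc Real.sqrt (u j ^ 2) ≤ Real.sqrt 1 := Real.sqrt_le_sqrt
          (le_trans (Finset.single_le_sum (fun i _ => sq_nonneg (u i)) (Finset.mem_univ j)) hu.le)
    _ = 1 := Real.sqrt_one
  exact Metric.isCompact_of_isClosed_isBounded hclosed hbdd

lemma Sph_nonempty (hd : 0 < d) : (Sph d).Nonempty := by
  refine ⟨fun j => if j = ⟨0, hd⟩ then 1 else 0, ?_⟩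
  simp [Sph, Finset.sum_ite_eq]

section FStuff
variable {m : ℕ} (x : Fin m → Fin d → ℝ) (α : Fin m → ℝ)
  (F : (Fin d → ℝ) → (Fin d → ℝ) → (Fin d → ℝ) → ℝ)
  (hF : ∀ w u v, F w u v =
      ∑ i, α i * (∑ j, w j * x i j) * (∑ j, u j * x i j) * (∑ j, v j * x i j))

include hF

lemma S2_eq : {y : ℝ | ∃ w u v : Fin d → ℝ,
      (∑ j, w j ^ 2 = 1) ∧ (∑ j, u j ^ 2 = 1) ∧ (∑ j, v j ^ 2 = 1) ∧ y = F w u v}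
    = (fun p : ((Fin d → ℝ) × (Fin d → ℝ) × (Fin d → ℝ)) => F p.1 p.2.1 p.2.2) ''
      (Sph d ×ˢ (Sph d ×ˢ Sph d)) := by
  ext y
  constructor
  · rintro ⟨w, u, v, hw, hu, hv, rfl⟩
    exact ⟨(w, u, v), ⟨hw, hu, hv⟩, rfl⟩
  · rintro ⟨⟨w, u, v⟩, ⟨hw, hu, hv⟩, rfl⟩
    exact ⟨w, u, v, hw, hu, hv, rfl⟩

lemma S2_compact : IsCompact {y : ℝ | ∃ w u v : Fin d → ℝ,
      (∑ j, w j ^ 2 = 1) ∧ (∑ j, u j ^ 2 = 1) ∧ (∑ j, v j ^ 2 = 1) ∧ y = F w u v} := by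
  rw [S2_eq x α F hF]
  refine ((isCompact_Sph.prod (isCompact_Sph.prod isCompact_Sph)).image ?_)
  have : (fun p : ((Fin d → ℝ) × (Fin d → ℝ) × (Fin d → ℝ)) => F p.1 p.2.1 p.2.2)
      = fun p => ∑ i, α i * (∑ j, p.1 j * x i j) * (∑ j, p.2.1 j * x i j) *
        (∑ j, p.2.2 j * x i j) := by
    funext p; exact hF _ _ _
  rw [this]
  fun_prop

lemma S1_bddAbove (w : Fin d → ℝ) :
    BddAbove {y : ℝ | ∃ u v : Fin d → ℝ, (∑ j, u j ^ 2 = 1) ∧ (∑ j, v j ^ 2 = 1) ∧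
      y = F w u v} := by
  have heq : {y : ℝ | ∃ u v : Fin d → ℝ, (∑ j, u j ^ 2 = 1) ∧ (∑ j, v j ^ 2 = 1) ∧
      y = F w u v} = (fun p : ((Fin d → ℝ) × (Fin d → ℝ)) => F w p.1 p.2) ''
      (Sph d ×ˢ Sph d) := by
    ext y
    constructor
    · rintro ⟨u, v, hu, hv, rfl⟩
      exact ⟨(u, v), ⟨hu, hv⟩, rfl⟩
    · rintro ⟨⟨u, v⟩, ⟨hu, hv⟩, rfl⟩
      exact ⟨u, v, hu, hv, rfl⟩
  rw [heq]
  refine ((isCompact_Sph.prod isCompact_Sph).image ?_).bddAbove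
  have : (fun p : ((Fin d → ℝ) × (Fin d → ℝ)) => F w p.1 p.2)
      = fun p => ∑ i, α i * (∑ j, w j * x i j) * (∑ j, p.1 j * x i j) *
        (∑ j, p.2 j * x i j) := by
    funext p; exact hF _ _ _
  rw [this]
  fun_prop

end FStuff

section FStuff
variable {d m : ℕ} (x : Fin m → Fin d → ℝ) (α : Fin m → ℝ)
  (F : (Fin d → ℝ) → (Fin d → ℝ) → (Fin d → ℝ) → ℝ)
  (hF : ∀ w u v, F w u v =
      ∑ i, α i * (∑ j, w j * x i j) * (∑ j, u j * x i j) * (∑ j, v j * x i j))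


include hF

lemma F_bilinear (u v : Fin d → ℝ) (w : Fin d → ℝ) :
    F w u v = ∑ j, w j *
      (∑ i, α i * x i j * (∑ l, u l * x i l) * (∑ l, v l * x i l)) := by
  rw [hF]
  have h1 : ∀ i : Fin m, ((α i * ∑ j, w j * x i j) * ∑ j, u j * x i j) * ∑ j, v j * x i j
      = ∑ j, w j * (α i * x i j * (∑ l, u l * x i l) * (∑ l, v l * x i l)) := by
    intro i
    calc ((α i * ∑ j, w j * x i j) * ∑ j, u j * x i j) * ∑ j, v j * x i j
        = (∑ j, w j * x i j) * (α i * (∑ l, u l * x i l) * (∑ l, v l * x i l)) := by ring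
      _ = ∑ j, (w j * x i j) * (α i * (∑ l, u l * x i l) * (∑ l, v l * x i l)) :=
          Finset.sum_mul _ _ _
      _ = ∑ j, w j * (α i * x i j * (∑ l, u l * x i l) * (∑ l, v l * x i l)) :=
          Finset.sum_congr rfl fun j _ => by ring
  rw [Finset.sum_congr rfl fun i _ => h1 i, Finset.sum_comm]
  exact Finset.sum_congr rfl fun j _ => (Finset.mul_sum _ _ _).symm

lemma F_scale_u (c : ℝ) (w u v : Fin d → ℝ) :
    F w (fun j => c * u j) v = c * F w u v := by
  rw [hF, hF, Finset.mul_sum]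
  refine Finset.sum_congr rfl fun i _ => ?_
  rw [show (∑ j, (c * u j) * x i j) = c * ∑ j, u j * x i j by
    rw [Finset.mul_sum]; exact Finset.sum_congr rfl fun j _ => by ring]
  ring

lemma exists_good_set (hd : 0 < d) :
    ∃ B : Set (Fin d → ℝ), MeasurableSet B ∧
      1 / (2 * (d : ℝ) - 1) ≤ (nu d B).toReal ∧
      ∀ w ∈ B,
        sSup {y : ℝ | ∃ u v : Fin d → ℝ, (∑ j, u j ^ 2 = 1) ∧ (∑ j, v j ^ 2 = 1) ∧
            y = F (fun j => w j / Real.sqrt (∑ i, w i ^ 2)) u v} ≥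
          (1 / Real.sqrt (2 * d)) *
            sSup {y : ℝ | ∃ w u v : Fin d → ℝ,
              (∑ j, w j ^ 2 = 1) ∧ (∑ j, u j ^ 2 = 1) ∧ (∑ j, v j ^ 2 = 1) ∧
              y = F w u v} := by
  classical
  -- the global maximum is attained
  set S2 : Set ℝ := {y : ℝ | ∃ w u v : Fin d → ℝ,
      (∑ j, w j ^ 2 = 1) ∧ (∑ j, u j ^ 2 = 1) ∧ (∑ j, v j ^ 2 = 1) ∧ y = F w u v} with hS2
  have hS2ne : S2.Nonempty := by
    obtain ⟨u0, hu0⟩ := Sph_nonempty hd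
    exact ⟨F u0 u0 u0, u0, u0, u0, hu0, hu0, hu0, rfl⟩
  have hmax : sSup S2 ∈ S2 := (S2_compact x α F hF).sSup_mem hS2ne
  obtain ⟨ws, us, vs, hws, hus, hvs, hlam⟩ := hmax
  set lam := sSup S2 with hlam_def
  set g : Fin d → ℝ := fun j => ∑ i, α i * x i j * (∑ l, us l * x i l) * (∑ l, vs l * x i l)
    with hg_def
  have hbil : ∀ w : Fin d → ℝ, F w us vs = ∑ j, w j * g j := fun w => F_bilinear x α F hF us vs w
  set G : ℝ := ∑ j, g j ^ 2 with hG_def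
  have hG0 : 0 ≤ G := Finset.sum_nonneg fun j _ => sq_nonneg _
  -- lam ≤ √G
  have hlamG : lam ≤ Real.sqrt G := by
    have h1 : lam = ∑ j, ws j * g j := by rw [hlam, hbil]
    have h2 : (∑ j, ws j * g j) ^ 2 ≤ (∑ j, ws j ^ 2) * G :=
      Finset.sum_mul_sq_le_sq_mul_sq _ _ _
    rw [hws, one_mul] at h2
    calc lam ≤ |∑ j, ws j * g j| := h1 ▸ le_abs_self _
    _ = Real.sqrt ((∑ j, ws j * g j) ^ 2) := (Real.sqrt_sq_eq_abs _).symm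
    _ ≤ Real.sqrt G := Real.sqrt_le_sqrt h2
  have hsqrt2d_pos : 0 < Real.sqrt (2 * (d : ℝ)) := by
    apply Real.sqrt_pos.mpr; positivity
  by_cases hGz : G = 0
  · -- degenerate case : g = 0, lam ≤ 0... in fact lam = 0
    refine ⟨Set.univ, MeasurableSet.univ, ?_, fun w _ => ?_⟩
    · rw [measure_univ, ENNReal.toReal_one]
      have hd1 : (1:ℝ) ≤ (d:ℝ) := by exact_mod_cast hd
      rw [div_le_one (by linarith)]; linarith
    · have hgj : ∀ j, g j = 0 := by
        intro j
        have := Finset.single_le_sum (f := fun j => g j ^ 2)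
          (fun i _ => sq_nonneg _) (Finset.mem_univ j)
        rw [← hG_def, hGz] at this
        exact pow_eq_zero_iff (n := 2) (by norm_num) |>.mp (le_antisymm this (sq_nonneg _))
      have hlam0 : lam ≤ 0 := by
        rw [hlam, hbil]
        simp [hgj]
      have hmem : F (fun j => w j / Real.sqrt (∑ i, w i ^ 2)) us vs = 0 := by
        rw [hbil]
        simp [hgj]
      refine ge_trans (le_csSup (S1_bddAbove x α F hF _)
        ⟨us, vs, hus, hvs, hmem.symm⟩) ?_
      have : 0 ≤ 1 / Real.sqrt (2 * (d:ℝ)) := by positivity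
      exact mul_nonpos_of_nonneg_of_nonpos this hlam0
  · -- main case
    have hGpos : 0 < G := lt_of_le_of_ne hG0 (Ne.symm hGz)
    have hsG : 0 < Real.sqrt G := Real.sqrt_pos.mpr hGpos
    set e : Fin d → ℝ := fun j => g j / Real.sqrt G with he_def
    have he : ∑ j, e j ^ 2 = 1 := by
      have hsq : ∀ j, e j ^ 2 = g j ^ 2 / G := by
        intro j; rw [he_def, div_pow, Real.sq_sqrt hG0]
      rw [Finset.sum_congr rfl fun j _ => hsq j, ← Finset.sum_div, ← hG_def, div_self hGz]
    refine ⟨{w | 1 / (2 * (d : ℝ)) ≤ Zf e w}, measurableSet_le measurable_const (measurable_Zf e),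
      markov_bound hd e he, fun w hw => ?_⟩
    simp only [Set.mem_setOf_eq] at hw
    set N : ℝ := ∑ i, w i ^ 2 with hN_def
    have hNnn : 0 ≤ N := Finset.sum_nonneg fun i _ => sq_nonneg _
    set wh : Fin d → ℝ := fun j => w j / Real.sqrt N with hwh_def
    -- ⟨wh, e⟩² = Zf e w
    have hinner : (∑ j, e j * wh j) ^ 2 = Zf e w := by
      have : ∑ j, e j * wh j = (∑ j, e j * w j) / Real.sqrt N := by
        rw [Finset.sum_div]
        exact Finset.sum_congr rfl fun j _ => by rw [hwh_def]; ring
      rw [this, div_pow, Real.sq_sqrt hNnn]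
      unfold Zf Nsq
      rw [← hN_def]
    -- ⟨wh, g⟩ = √G * ⟨wh, e⟩
    have hgsplit : ∑ j, wh j * g j = Real.sqrt G * ∑ j, e j * wh j := by
      rw [Finset.mul_sum]
      refine Finset.sum_congr rfl fun j _ => ?_
      rw [he_def]
      field_simp
    -- |⟨wh, g⟩| ≥ √G / √(2d)
    have habs : Real.sqrt G / Real.sqrt (2 * (d:ℝ)) ≤ |∑ j, wh j * g j| := by
      rw [hgsplit, abs_mul, abs_of_pos hsG]
      rw [div_eq_mul_inv, ← one_div]
      refine mul_le_mul_of_nonneg_left ?_ hsG.le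
      have h1 : |∑ j, e j * wh j| = Real.sqrt (Zf e w) := by
        rw [← hinner, Real.sqrt_sq_eq_abs]
      rw [h1]
      calc 1 / Real.sqrt (2 * (d:ℝ)) = Real.sqrt (1 / (2 * (d:ℝ))) := by
            rw [one_div, one_div, Real.sqrt_inv]
      _ ≤ Real.sqrt (Zf e w) := Real.sqrt_le_sqrt hw
    -- the witness
    set c : ℝ := ∑ j, wh j * g j with hc_def
    set ep : ℝ := if c < 0 then (-1 : ℝ) else 1 with hep_def
    have hep_sq : ep ^ 2 = 1 := by
      rw [hep_def]; split <;> norm_num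
    have hepc : ep * c = |c| := by
      rw [hep_def]
      rcases lt_or_ge c 0 with h | h
      · rw [if_pos h, abs_of_neg h]; ring
      · rw [if_neg (not_lt.mpr h), abs_of_nonneg h]; ring
    have hus' : ∑ j, (ep * us j) ^ 2 = 1 := by
      simp only [mul_pow, ← Finset.mul_sum, hus, hep_sq, mul_one]
    have hval : F wh (fun j => ep * us j) vs = |c| := by
      rw [F_scale_u x α F hF, hbil, ← hc_def, hepc]
    have hmem : |c| ∈ {y : ℝ | ∃ u v : Fin d → ℝ, (∑ j, u j ^ 2 = 1) ∧ (∑ j, v j ^ 2 = 1) ∧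
        y = F wh u v} := ⟨fun j => ep * us j, vs, hus', hvs, hval.symm⟩
    refine ge_trans (le_csSup (S1_bddAbove x α F hF wh) hmem) ?_
    calc (1 / Real.sqrt (2 * (d:ℝ))) * lam ≤ (1 / Real.sqrt (2 * (d:ℝ))) * Real.sqrt G :=
          mul_le_mul_of_nonneg_left hlamG (by positivity)
    _ = Real.sqrt G / Real.sqrt (2 * (d:ℝ)) := by ring
    _ ≤ |c| := habs

end FStuff

lemma union_bound {d s : ℕ} (B : Set (Fin d → ℝ)) (hB : MeasurableSet B)
    {q : ℝ} (hq0 : 0 ≤ q) (hBm : q ≤ (nu d B).toReal)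
    (E : Set (Fin s → Fin d → ℝ)) (hUE : {W : Fin s → Fin d → ℝ | ∃ t, W t ∈ B} ⊆ E) :
    1 - (1 - q) ^ s ≤ ((Measure.pi fun _ : Fin s => nu d) E).toReal := by
  set μs := (Measure.pi fun _ : Fin s => nu d) with hμs
  have : IsProbabilityMeasure μs := by rw [hμs]; infer_instance
  set U : Set (Fin s → Fin d → ℝ) := {W | ∃ t, W t ∈ B} with hU_def
  have hU : MeasurableSet U := by
    have : U = ⋃ t : Fin s, (fun W : Fin s → Fin d → ℝ => W t) ⁻¹' B := by
      ext W; simp [hU_def]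
    rw [this]
    exact MeasurableSet.iUnion fun t => (measurable_pi_apply t) hB
  have hUc : Uᶜ = Set.pi Set.univ (fun _ : Fin s => Bᶜ) := by
    ext W; simp [hU_def]
  have hUc_meas : μs Uᶜ = (nu d Bᶜ) ^ s := by
    rw [hUc, hμs, Measure.pi_pi, Finset.prod_const, Finset.card_univ, Fintype.card_fin]
  have hUeq : μs U = 1 - (nu d Bᶜ) ^ s := by
    rw [← hUc_meas, ← prob_compl_eq_one_sub hU.compl, compl_compl]
  have hBc_le : (nu d Bᶜ) ^ s ≤ 1 := by
    exact pow_le_one' prob_le_one s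
  have htoReal : (μs U).toReal = 1 - ((nu d Bᶜ).toReal) ^ s := by
    rw [hUeq, ENNReal.toReal_sub_of_le hBc_le ENNReal.one_ne_top, ENNReal.toReal_one,
      ENNReal.toReal_pow]
  have hp1 : (nu d B).toReal ≤ 1 :=
    ENNReal.toReal_le_of_le_ofReal zero_le_one (by simpa using prob_le_one)
  have hcompl : (nu d Bᶜ).toReal = 1 - (nu d B).toReal := by
    rw [prob_compl_eq_one_sub hB,
      ENNReal.toReal_sub_of_le prob_le_one ENNReal.one_ne_top, ENNReal.toReal_one]
  have hpow : ((nu d Bᶜ).toReal) ^ s ≤ (1 - q) ^ s := by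
    apply pow_le_pow_left₀ ENNReal.toReal_nonneg
    rw [hcompl]; linarith
  have hmono : (μs U).toReal ≤ (μs E).toReal :=
    ENNReal.toReal_le_toReal (measure_ne_top _ _) (measure_ne_top _ _) |>.mpr
      (measure_mono hUE)
  calc 1 - (1 - q) ^ s ≤ 1 - ((nu d Bᶜ).toReal) ^ s := by linarith
  _ = (μs U).toReal := htoReal.symm
  _ ≤ (μs E).toReal := hmono

lemma exp_bound {d s : ℕ} (hd : 0 < d) {δ : ℝ} (hδ0 : 0 < δ)
    (hsδ : (s : ℝ) ≥ (2 * d - 1) * Real.log (1 / δ)) :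
    (1 - 1 / (2 * (d : ℝ) - 1)) ^ s ≤ δ := by
  have hd1 : (1 : ℝ) ≤ (d : ℝ) := by exact_mod_cast hd
  have hD : (1 : ℝ) ≤ 2 * (d : ℝ) - 1 := by linarith
  have hDpos : (0 : ℝ) < 2 * (d : ℝ) - 1 := by linarith
  set q : ℝ := 1 / (2 * (d : ℝ) - 1) with hq_def
  have hq0 : 0 < q := by positivity
  have hq1 : q ≤ 1 := by rw [hq_def, div_le_one hDpos]; linarith
  have h1 : 1 - q ≤ Real.exp (-q) := by
    linarith [Real.add_one_le_exp (-q)]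
  have h2 : (1 - q) ^ s ≤ Real.exp (-q) ^ s :=
    pow_le_pow_left₀ (by linarith) h1 s
  have h3 : Real.exp (-q) ^ s = Real.exp (-(q * s)) := by
    rw [← Real.exp_nat_mul]; ring_nf
  have h4 : Real.exp (-(q * s)) ≤ δ := by
    rw [← Real.le_log_iff_exp_le hδ0]
    have hlog : Real.log (1 / δ) = - Real.log δ := by
      rw [one_div, Real.log_inv]
    rw [hlog] at hsδ
    have : q * (2 * (d:ℝ) - 1) = 1 := by
      rw [hq_def]; field_simp
    nlinarith [mul_le_mul_of_nonneg_left hsδ hq0.le]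
  calc (1 - q) ^ s ≤ Real.exp (-q) ^ s := h2
  _ = Real.exp (-(q * s)) := h3
  _ ≤ δ := h4


/-- Probabilistic content of Lemma A.3: with `s` independent Gaussian restarts
`w₁, …, w_s` in `ℝ^d`, with probability at least `1 − (1 − 1/(2d−1))^s` some
normalized direction `ŵ_t` admits a bilinear completion within a factor `1/√(2d)`
of the global maximum of the trilinear form `F`; in particular, for
`s ≥ (2d−1)·ln(1/δ)` this holds with probability at least `1 − δ`. -/
theorem random_restarts_tensor_approx
    (d m s : ℕ) (hd : 0 < d) (hm : 0 < m) (hs : 0 < s)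
    (x : Fin m → Fin d → ℝ) (α : Fin m → ℝ)
    (F : (Fin d → ℝ) → (Fin d → ℝ) → (Fin d → ℝ) → ℝ)
    (hF : ∀ w u v, F w u v =
      ∑ i, α i * (∑ j, w j * x i j) * (∑ j, u j * x i j) * (∑ j, v j * x i j)) :
    (((Measure.pi fun _ : Fin s =>
          (Measure.pi fun _ : Fin d => gaussianReal 0 1)))
        {W : Fin s → Fin d → ℝ | ∃ t : Fin s,
          sSup {y : ℝ | ∃ u v : Fin d → ℝ, (∑ j, u j ^ 2 = 1) ∧ (∑ j, v j ^ 2 = 1) ∧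
              y = F (fun j => W t j / Real.sqrt (∑ i, W t i ^ 2)) u v} ≥
            (1 / Real.sqrt (2 * d)) *
              sSup {y : ℝ | ∃ w u v : Fin d → ℝ,
                (∑ j, w j ^ 2 = 1) ∧ (∑ j, u j ^ 2 = 1) ∧ (∑ j, v j ^ 2 = 1) ∧
                y = F w u v}}).toReal ≥
      1 - (1 - 1 / (2 * d - 1)) ^ s ∧
    ∀ δ : ℝ, 0 < δ → δ < 1 → (s : ℝ) ≥ (2 * d - 1) * Real.log (1 / δ) →
      (((Measure.pi fun _ : Fin s =>
            (Measure.pi fun _ : Fin d => gaussianReal 0 1)))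
          {W : Fin s → Fin d → ℝ | ∃ t : Fin s,
            sSup {y : ℝ | ∃ u v : Fin d → ℝ, (∑ j, u j ^ 2 = 1) ∧ (∑ j, v j ^ 2 = 1) ∧
                y = F (fun j => W t j / Real.sqrt (∑ i, W t i ^ 2)) u v} ≥
              (1 / Real.sqrt (2 * d)) *
                sSup {y : ℝ | ∃ w u v : Fin d → ℝ,
                  (∑ j, w j ^ 2 = 1) ∧ (∑ j, u j ^ 2 = 1) ∧ (∑ j, v j ^ 2 = 1) ∧
                  y = F w u v}}).toReal ≥ 1 - δ := by
  obtain ⟨B, hB, hBm, hprop⟩ := exists_good_set x α F hF hd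
  have hd1 : (1:ℝ) ≤ (d:ℝ) := by exact_mod_cast hd
  have hq0 : (0:ℝ) ≤ 1 / (2 * (d:ℝ) - 1) := by
    apply div_nonneg zero_le_one; linarith
  have hsub : {W : Fin s → Fin d → ℝ | ∃ t, W t ∈ B} ⊆
      {W : Fin s → Fin d → ℝ | ∃ t : Fin s,
        sSup {y : ℝ | ∃ u v : Fin d → ℝ, (∑ j, u j ^ 2 = 1) ∧ (∑ j, v j ^ 2 = 1) ∧
            y = F (fun j => W t j / Real.sqrt (∑ i, W t i ^ 2)) u v} ≥
          (1 / Real.sqrt (2 * d)) *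
            sSup {y : ℝ | ∃ w u v : Fin d → ℝ,
              (∑ j, w j ^ 2 = 1) ∧ (∑ j, u j ^ 2 = 1) ∧ (∑ j, v j ^ 2 = 1) ∧
              y = F w u v}} := by
    rintro W ⟨t, ht⟩
    exact ⟨t, hprop (W t) ht⟩
  have h1 := union_bound B hB hq0 hBm _ hsub
  constructor
  · exact h1
  · intro δ hδ0 hδ1 hsδ
    have h2 := exp_bound (s := s) hd hδ0 hsδ
    have : (1:ℝ) - δ ≤ 1 - (1 - 1 / (2 * (d:ℝ) - 1)) ^ s := by linarith
    exact le_trans this h1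
end
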